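/- The many-one semilattice embeds into the Weihrauch degrees: fix Turing-incomparable p, q ∈ ℕ^ℕ, and for A ⊆ ℕ define m_A : ℕ → {p,q} by m_A(n) = p iff n ∈ A; then A ≤_m B if and only if m_A ≤_W m_B, and m_{A⊕B} ≡_W m_A ⊔ m_B. -/

import Mathlib

open scoped Classical

/-! ## Basic notions of Weihrauch complexity -/

/-- The finite prefix of length `m` of a point of Baire space, as a list. -/
def pref (p : ℕ → ℕ) (m : ℕ) : List ℕ := List.ofFn (fun i : Fin m => p i)

/-- Type-2 computability of a partial function on Baire space, defined via monotone
computable word functions producing longer and longer prefixes of the output. -/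
def BaireComputable (F : (ℕ → ℕ) →. (ℕ → ℕ)) : Prop :=
  ∃ ψ : List ℕ → List ℕ, Computable ψ ∧
    (∀ u v : List ℕ, u <+: v → ψ u <+: ψ v) ∧
    ∀ p q, q ∈ F p → ∀ n, ∃ m, (ψ (pref p m))[n]? = some (q n)

/-- The interleaving pairing `⟨p,q⟩` on Baire space. -/
def pairB (p q : ℕ → ℕ) : ℕ → ℕ := fun n => if n % 2 = 0 then p (n / 2) else q (n / 2)

def evenPart (r : ℕ → ℕ) : ℕ → ℕ := fun n => r (2 * n)

def oddPart (r : ℕ → ℕ) : ℕ → ℕ := fun n => r (2 * n + 1)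

/-- The `i`-th component of the countable tupling `⟨p₀,p₁,…⟩⟨i,k⟩ = pᵢ(k)`
(using the Cantor pairing). -/
def proj (r : ℕ → ℕ) (i : ℕ) : ℕ → ℕ := fun k => r (Nat.pair i k)

/-- A represented space: a set `X` together with a surjective partial map
from Baire space onto `X`. -/
structure RepSp (X : Type*) where
  δ : (ℕ → ℕ) →. X
  surj : ∀ x : X, ∃ p, x ∈ δ p

theorem mem_part_mk {α : Type*} {D : Prop} {g : D → α} {a : α} (h : D) (e : g h = a) :
    a ∈ Part.mk D g := Part.mem_mk_iff.mpr ⟨h, e⟩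

/-- The identity representation of Baire space. -/
def repBaire : RepSp (ℕ → ℕ) where
  δ := fun p => Part.some p
  surj := fun p => ⟨p, Part.mem_some p⟩

/-- The standard representation of the natural numbers. -/
def repNat : RepSp ℕ where
  δ := fun p => Part.some (p 0)
  surj := fun n => ⟨fun _ => n, Part.mem_some n⟩

/-- `F` is a realizer of the problem `f :⊆ X ⇉ Y` (a problem is a multi-valued
function `f : X → Set Y`, whose domain is the set of `x` with `f x` nonempty). -/
def Realizes {X Y : Type*} (δX : RepSp X) (δY : RepSp Y)
    (f : X → Set Y) (F : (ℕ → ℕ) →. (ℕ → ℕ)) : Prop :=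
  ∀ p x, x ∈ δX.δ p → (f x).Nonempty → ∃ q ∈ F p, ∃ y ∈ δY.δ q, y ∈ f x

/-- Weihrauch reducibility: `f ≤_W g` iff there are computable `H, K` such that
`p ↦ H⟨p, G(K(p))⟩` realizes `f` whenever `G` realizes `g`. -/
def WRed {X Y Z W : Type*} (δX : RepSp X) (δY : RepSp Y) (δZ : RepSp Z) (δW : RepSp W)
    (f : X → Set Y) (g : Z → Set W) : Prop :=
  ∃ H K : (ℕ → ℕ) →. (ℕ → ℕ), BaireComputable H ∧ BaireComputable K ∧
    ∀ G : (ℕ → ℕ) →. (ℕ → ℕ), Realizes δZ δW g G →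
      Realizes δX δY f
        (fun p => (K p).bind fun r => (G r).bind fun q => H (pairB p q))

/-- Strong Weihrauch reducibility: `f ≤_sW g` iff there are computable `H, K`
such that `H ∘ G ∘ K` realizes `f` whenever `G` realizes `g`. -/
def SWRed {X Y Z W : Type*} (δX : RepSp X) (δY : RepSp Y) (δZ : RepSp Z) (δW : RepSp W)
    (f : X → Set Y) (g : Z → Set W) : Prop :=
  ∃ H K : (ℕ → ℕ) →. (ℕ → ℕ), BaireComputable H ∧ BaireComputable K ∧
    ∀ G : (ℕ → ℕ) →. (ℕ → ℕ), Realizes δZ δW g G →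
      Realizes δX δY f (fun p => (K p).bind fun r => (G r).bind fun q => H q)

/-- Weihrauch equivalence. -/
def WEquiv {X Y Z W : Type*} (δX : RepSp X) (δY : RepSp Y) (δZ : RepSp Z) (δW : RepSp W)
    (f : X → Set Y) (g : Z → Set W) : Prop :=
  WRed δX δY δZ δW f g ∧ WRed δZ δW δX δY g f

/-- Strong Weihrauch equivalence. -/
def SWEquiv {X Y Z W : Type*} (δX : RepSp X) (δY : RepSp Y) (δZ : RepSp Z) (δW : RepSp W)
    (f : X → Set Y) (g : Z → Set W) : Prop :=
  SWRed δX δY δZ δW f g ∧ SWRed δZ δW δX δY g f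

/-- The identity problem on Baire space. -/
def idProblem : (ℕ → ℕ) → Set (ℕ → ℕ) := fun p => {p}

/-! ## Constructions on representations and problems -/

/-- Representation of the product of two represented spaces. -/
def prodRep {X Z : Type*} (δX : RepSp X) (δZ : RepSp Z) : RepSp (X × Z) where
  δ := fun r => (δX.δ (evenPart r)).bind fun x => (δZ.δ (oddPart r)).map fun z => (x, z)
  surj := by
    intro xz
    obtain ⟨p, hp⟩ := δX.surj xz.1
    obtain ⟨q, hq⟩ := δZ.surj xz.2
    have he : evenPart (pairB p q) = p := by
      funext n
      have h1 : (2 * n) % 2 = 0 := by omega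
      have h2 : (2 * n) / 2 = n := by omega
      simp [evenPart, pairB, h1, h2]
    have ho : oddPart (pairB p q) = q := by
      funext n
      have h1 : ¬((2 * n + 1) % 2 = 0) := by omega
      have h2 : (2 * n + 1) / 2 = n := by omega
      simp [oddPart, pairB, h1, h2]
    refine ⟨pairB p q, Part.mem_bind_iff.mpr ⟨xz.1, by rw [he]; exact hp,
      (Part.mem_map_iff _).mpr ⟨xz.2, by rw [ho]; exact hq, rfl⟩⟩⟩

/-- The product `f × g` of two problems. -/
def prodProblem {X Y Z W : Type*} (f : X → Set Y) (g : Z → Set W) :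
    X × Z → Set (Y × W) :=
  fun xz => f xz.1 ×ˢ g xz.2

/-- Representation of the disjoint union of two represented spaces. -/
def sumRep {X Z : Type*} (δX : RepSp X) (δZ : RepSp Z) : RepSp (X ⊕ Z) where
  δ := fun r =>
    if r 0 = 0 then (δX.δ fun n => r (n + 1)).map Sum.inl
    else if r 0 = 1 then (δZ.δ fun n => r (n + 1)).map Sum.inr
    else Part.none
  surj := by
    rintro (x | z)
    · obtain ⟨p, hp⟩ := δX.surj x
      refine ⟨fun n => Nat.casesOn n 0 p, ?_⟩
      show Sum.inl x ∈ (δX.δ p).map Sum.inl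
      exact (Part.mem_map_iff _).mpr ⟨x, hp, rfl⟩
    · obtain ⟨p, hp⟩ := δZ.surj z
      refine ⟨fun n => Nat.casesOn n 1 p, ?_⟩
      show Sum.inr z ∈ (δZ.δ p).map Sum.inr
      exact (Part.mem_map_iff _).mpr ⟨z, hp, rfl⟩

/-- The coproduct `f ⊔ g` of two problems. -/
def coprodProblem {X Y Z W : Type*} (f : X → Set Y) (g : Z → Set W) :
    X ⊕ Z → Set (Y ⊕ W)
  | Sum.inl x => Sum.inl '' f x
  | Sum.inr z => Sum.inr '' g z

/-- The meet `f ⊓ g` of two problems. -/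
def meetProblem {X Y Z W : Type*} (f : X → Set Y) (g : Z → Set W) :
    X × Z → Set (Y ⊕ W) :=
  fun xz => Sum.inl '' f xz.1 ∪ Sum.inr '' g xz.2

/-- Representation of the space of sequences `X^ℕ` via the countable tupling. -/
noncomputable def seqRep {X : Type*} (δX : RepSp X) : RepSp (ℕ → X) where
  δ := fun r => Part.mk (∀ i : ℕ, ∃ x, x ∈ δX.δ (proj r i))
    (fun h i => Classical.choose (h i))
  surj := by
    intro x
    choose p hp using fun i => δX.surj (x i)
    refine ⟨fun m => p (Nat.unpair m).1 (Nat.unpair m).2, ?_⟩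
    have hproj : ∀ i, proj (fun m => p (Nat.unpair m).1 (Nat.unpair m).2) i = p i := by
      intro i; funext k; simp [proj]
    have hdom : ∀ i : ℕ, ∃ y, y ∈ δX.δ (proj (fun m => p (Nat.unpair m).1 (Nat.unpair m).2) i) :=
      fun i => ⟨x i, by rw [hproj i]; exact hp i⟩
    refine mem_part_mk hdom ?_
    funext i
    exact Part.mem_unique (Classical.choose_spec (hdom i)) (by rw [hproj i]; exact hp i)

/-- The parallelization `f̂` of a problem. -/
def parallelProblem {X Y : Type*} (f : X → Set Y) : (ℕ → X) → Set (ℕ → Y) :=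
  fun x => {y | ∀ i, y i ∈ f (x i)}

/-- Representation of the finite power `Xⁿ` via the countable tupling. -/
noncomputable def finProdRep (n : ℕ) {X : Type*} (δX : RepSp X) : RepSp (Fin n → X) where
  δ := fun r => Part.mk (∀ i : Fin n, ∃ x, x ∈ δX.δ (proj r i))
    (fun h i => Classical.choose (h i))
  surj := by
    intro x
    choose p hp using fun i => δX.surj (x i)
    classical
    refine ⟨fun m => if h : (Nat.unpair m).1 < n then p ⟨_, h⟩ (Nat.unpair m).2 else 0, ?_⟩
    have hproj : ∀ i : Fin n,
        proj (fun m => if h : (Nat.unpair m).1 < n then p ⟨_, h⟩ (Nat.unpair m).2 else 0) i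
          = p i := by
      intro i; funext k; simp [proj, i.isLt]
    have hdom : ∀ i : Fin n, ∃ y, y ∈ δX.δ
        (proj (fun m => if h : (Nat.unpair m).1 < n then p ⟨_, h⟩ (Nat.unpair m).2 else 0) i) :=
      fun i => ⟨x i, by rw [hproj i]; exact hp i⟩
    refine mem_part_mk hdom ?_
    funext i
    exact Part.mem_unique (Classical.choose_spec (hdom i)) (by rw [hproj i]; exact hp i)

/-- The `n`-fold product `fⁿ` of a problem with itself. -/
def finProdProblem (n : ℕ) {X Y : Type*} (f : X → Set Y) :
    (Fin n → X) → Set (Fin n → Y) :=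
  fun x => {y | ∀ i, y i ∈ f (x i)}

/-- Representation of the space `X*` of words over `X`. -/
noncomputable def starRep {X : Type*} (δX : RepSp X) : RepSp (Σ n : ℕ, Fin n → X) where
  δ := fun r => Part.mk (∀ i : Fin (r 0), ∃ x, x ∈ δX.δ (proj (fun m => r (m + 1)) i))
    (fun h => ⟨r 0, fun i => Classical.choose (h i)⟩)
  surj := by
    rintro ⟨n, x⟩
    choose p hp using fun i => δX.surj (x i)
    classical
    have hproj : ∀ i : Fin n,
        proj (fun m' => if h : (Nat.unpair m').1 < n then p ⟨_, h⟩ (Nat.unpair m').2 else 0) i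
          = p i := by
      intro i; funext k; simp [proj, i.isLt]
    have hdom : ∀ i : Fin n, ∃ y, y ∈ δX.δ
        (proj (fun m' => if h : (Nat.unpair m').1 < n then p ⟨_, h⟩ (Nat.unpair m').2 else 0) i) :=
      fun i => ⟨x i, by rw [hproj i]; exact hp i⟩
    refine ⟨fun m => Nat.casesOn m n
      (fun m' => if h : (Nat.unpair m').1 < n then p ⟨_, h⟩ (Nat.unpair m').2 else 0),
      Part.mem_mk_iff.mpr ⟨hdom, ?_⟩⟩
    have hx : (fun i : Fin n => Classical.choose (hdom i)) = x := funext fun i =>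
      Part.mem_unique (Classical.choose_spec (hdom i)) (by rw [hproj i]; exact hp i)
    exact congrArg (Sigma.mk n) hx

/-- The finite parallelization `f*` of a problem. -/
def starProblem {X Y : Type*} (f : X → Set Y) :
    (Σ n : ℕ, Fin n → X) → Set (Σ n : ℕ, Fin n → Y) :=
  fun x => {y | ∃ e : x.1 = y.1, ∀ i : Fin x.1, y.2 (Fin.cast e i) ∈ f (x.2 i)}

/-- Representation of a countable disjoint union of represented spaces. -/
def csumRep {Z : ℕ → Type*} (δZ : ∀ i, RepSp (Z i)) : RepSp (Σ i, Z i) where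
  δ := fun r => ((δZ (r 0)).δ (fun n => r (n + 1))).map fun z => ⟨r 0, z⟩
  surj := by
    rintro ⟨i, z⟩
    obtain ⟨p, hp⟩ := (δZ i).surj z
    exact ⟨fun n => Nat.casesOn n i p, (Part.mem_map_iff _).mpr ⟨z, hp, rfl⟩⟩

/-- The countable coproduct `⊔ᵢ gᵢ` of a sequence of problems. -/
def csumProblem {Z W : ℕ → Type*} (g : ∀ i, Z i → Set (W i)) :
    (Σ i, Z i) → Set (Σ i, W i) :=
  fun x => Sigma.mk x.1 '' g x.1 x.2

/-! ## Limits and jumps -/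

/-- The limit map on Baire space, as a (single-valued) problem:
`lim⟨p₀,p₁,…⟩` is the pointwise limit of the sequence `(pₙ)ₙ`. -/
def limProblem : (ℕ → ℕ) → Set (ℕ → ℕ) :=
  fun r => {q | ∀ n, ∃ N, ∀ m, N ≤ m → proj r m n = q n}

/-- The limit map on Baire space as a partial (single-valued) function. -/
noncomputable def limP : (ℕ → ℕ) →. (ℕ → ℕ) :=
  fun r => Part.mk (∀ n, ∃ N, ∀ m, N ≤ m → proj r m n = proj r N n)
    (fun h n => proj r (Classical.choose (h n)) n)

/-- The jump `(X′, δ′)` of a represented space: `δ′ := δ ∘ lim`. -/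
noncomputable def jumpRep {X : Type*} (δ : RepSp X) : RepSp X where
  δ := fun p => (limP p).bind δ.δ
  surj := by
    intro x
    obtain ⟨p, hp⟩ := δ.surj x
    refine ⟨fun m => p (Nat.unpair m).2, Part.mem_bind_iff.mpr ⟨p, ?_, hp⟩⟩
    have hproj : ∀ m, proj (fun m => p (Nat.unpair m).2) m = p := by
      intro m; funext k; simp [proj]
    have hdom : ∀ n, ∃ N, ∀ m, N ≤ m →
        proj (fun m => p (Nat.unpair m).2) m n = proj (fun m => p (Nat.unpair m).2) N n :=
      fun n => ⟨0, fun m _ => by rw [hproj m, hproj 0]⟩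
    refine mem_part_mk hdom ?_
    funext n
    rw [hproj]

/-! ## Choice problems -/

/-- The representation of subsets of `ℕ` by enumerations of their complements:
`p` is a name of `A` iff `p` enumerates (via `p m = n + 1`) exactly the `n ∉ A`. -/
def enumNegRep : RepSp (Set ℕ) where
  δ := fun p => Part.some {n | ∀ m, p m ≠ n + 1}
  surj := by
    intro S
    by_cases h : Sᶜ.Nonempty
    · obtain ⟨f, hf⟩ := (Set.to_countable Sᶜ).exists_eq_range h
      refine ⟨fun m => f m + 1, Part.mem_some_iff.mpr ?_⟩
      ext n
      simp only [Set.mem_setOf_eq]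
      constructor
      · intro hn m hm
        have hfm : f m ∈ Sᶜ := by rw [hf]; exact ⟨m, rfl⟩
        have hfmn : f m = n := by omega
        rw [hfmn] at hfm
        exact hfm hn
      · intro hn
        by_contra hS
        have hmem : n ∈ Sᶜ := hS
        rw [hf] at hmem
        obtain ⟨m, hm⟩ := hmem
        exact hn m (by omega)
    · refine ⟨fun _ => 0, Part.mem_some_iff.mpr ?_⟩
      have hS : S = Set.univ := by
        rw [← compl_compl S, Set.not_nonempty_iff_eq_empty.mp h, Set.compl_empty]
      rw [hS]
      ext n
      simp

/-- Choice on the natural numbers: given (a name of) a nonempty set `A ⊆ ℕ`,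
find an element of `A`. -/
def CNat : Set ℕ → Set ℕ := fun A => A

/-- Choice on the finite set `{0, …, k-1}`. -/
def CFin (k : ℕ) : Set ℕ → Set ℕ := fun A => {n | n ∈ A ∧ A ⊆ Set.Iio k}

/-- The limited principle of omniscience as a problem. -/
noncomputable def LPOProblem : (ℕ → ℕ) → Set ℕ :=
  fun p => {if ∃ k, p k = 0 then 1 else 0}


/-- Restriction of a problem on Baire space to a set `A`. -/
def restrictProblem (F : (ℕ → ℕ) → Set (ℕ → ℕ)) (A : Set (ℕ → ℕ)) :
    (ℕ → ℕ) → Set (ℕ → ℕ) :=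
  fun p => {q | q ∈ F p ∧ p ∈ A}

/-- A problem is a fractal if it has a representative on Baire space all of whose
restrictions to clopen sets meeting its domain are Weihrauch equivalent to it. -/
def Fractal {X Y : Type*} (δX : RepSp X) (δY : RepSp Y) (f : X → Set Y) : Prop :=
  ∃ F : (ℕ → ℕ) → Set (ℕ → ℕ),
    WEquiv repBaire repBaire δX δY F f ∧
    ∀ A : Set (ℕ → ℕ), IsClopen A → (A ∩ {p | (F p).Nonempty}).Nonempty →
      WEquiv repBaire repBaire repBaire repBaire (restrictProblem F A) F

/-- A problem `f` is densely realized if for every name `p` of an admissible instance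
the set of names of solutions is dense in the domain of the output representation. -/
def DenselyRealized {X Y : Type*} (δX : RepSp X) (δY : RepSp Y) (f : X → Set Y) : Prop :=
  ∀ p, ∀ x ∈ δX.δ p, (f x).Nonempty →
    {q : ℕ → ℕ | (δY.δ q).Dom} ⊆ closure {q : ℕ → ℕ | ∃ y ∈ δY.δ q, y ∈ f x}

/-- Turing reducibility on Baire space: `a` is computable from `b`. -/
def TRed (a b : ℕ → ℕ) : Prop := ∃ F, BaireComputable F ∧ a ∈ F b

/-- The two-point space `{p, q}` represented by the identity. -/
def pqRep (p q : ℕ → ℕ) : RepSp {r : ℕ → ℕ // r = p ∨ r = q} where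
  δ := fun r => Part.mk (r = p ∨ r = q) (fun h => ⟨r, h⟩)
  surj := fun x => ⟨x.1, Part.mem_mk_iff.mpr ⟨x.2, rfl⟩⟩

/-- The problem `m_A` associated with a set `A ⊆ ℕ`. -/
noncomputable def mProblem (p q : ℕ → ℕ) (A : Set ℕ) :
    ℕ → Set {r : ℕ → ℕ // r = p ∨ r = q} :=
  fun n => {y | y.1 = if n ∈ A then p else q}

/-- The join `A ⊕ B` of two sets of natural numbers. -/
def mJoin (A B : Set ℕ) : Set ℕ :=
  {k | (k % 2 = 0 ∧ k / 2 ∈ A) ∨ (k % 2 = 1 ∧ k / 2 ∈ B)}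

/-- The cardinality `#f` of a problem: the supremum of the cardinalities of sets
`M ⊆ dom f` whose images under `f` are pairwise disjoint. -/
noncomputable def problemCard {X Y : Type} (f : X → Set Y) : Cardinal :=
  sSup {c | ∃ M : Set X, (∀ x ∈ M, (f x).Nonempty) ∧ M.PairwiseDisjoint f ∧
    c = Cardinal.mk M}

/-- Computability of a problem: it has a computable realizer. -/
def ComputableProblem {X Y : Type*} (δX : RepSp X) (δY : RepSp Y) (f : X → Set Y) : Prop :=
  ∃ F, BaireComputable F ∧ Realizes δX δY f F

/-- The minimum function on Baire space. -/
def minProblem : (ℕ → ℕ) → Set ℕ :=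
  fun p => {n | n ∈ Set.range p ∧ ∀ m, n ≤ p m}

/-- The complementary minimum function `minᶜ`. -/
def mincProblem : (ℕ → ℕ) → Set ℕ :=
  fun p => {n | (∀ m, p m ≠ n) ∧ ∀ j, j < n → ∃ m, p m = j}

/-- The maximum function on Baire space (defined on bounded sequences). -/
def maxProblem : (ℕ → ℕ) → Set ℕ :=
  fun p => {n | n ∈ Set.range p ∧ ∀ m, p m ≤ n}

/-! ### Auxiliary lemmas -/

section ManyOneAux

open List

lemma pref_eq_map_range (p : ℕ → ℕ) (m : ℕ) : pref p m = (List.range m).map p := by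
  apply List.ext_getElem?
  intro i
  rw [pref, List.getElem?_ofFn, List.getElem?_map]
  by_cases h : i < m
  · simp [List.ofFnNthVal, h, List.getElem?_range h]
  · rw [List.getElem?_eq_none (by simpa using Nat.le_of_not_lt h)]
    simp [List.ofFnNthVal, h]

lemma mapRange_getElem? {L : ℕ} (g : ℕ → ℕ) {n : ℕ} (h : n < L) :
    ((List.range L).map g)[n]? = some (g n) := by
  rw [List.getElem?_map, List.getElem?_range h]; rfl

lemma mapRange_prefix {a b : ℕ} (h : a ≤ b) {g g' : ℕ → ℕ}
    (hg : ∀ i < a, g i = g' i) :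
    (List.range a).map g <+: (List.range b).map g' := by
  have he : (List.range a).map g = ((List.range b).map g').take a := by
    rw [← List.map_take, List.take_range, min_eq_left h]
    exact List.map_congr_left fun i hi => hg i (List.mem_range.mp hi)
  rw [he]; exact List.take_prefix _ _

lemma prefix_getElem? {l l' : List ℕ} (h : l <+: l') {k : ℕ} {a : ℕ}
    (hk : l[k]? = some a) : l'[k]? = some a := by
  obtain ⟨t, rfl⟩ := h
  have hlt : k < l.length := (List.getElem?_eq_some_iff.mp hk).1
  rw [List.getElem?_append, if_pos hlt]
  exact hk

lemma prefix_getD {l l' : List ℕ} (h : l <+: l') {k : ℕ} (hk : k < l.length) :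
    l.getD k 0 = l'.getD k 0 := by
  have h1 : l[k]? = some l[k] := List.getElem?_eq_some_iff.mpr ⟨hk, rfl⟩
  have h2 := prefix_getElem? h h1
  rw [List.getD_eq_getElem?_getD, List.getD_eq_getElem?_getD, h1, h2]

lemma pref_mono (p : ℕ → ℕ) {m m' : ℕ} (h : m ≤ m') : pref p m <+: pref p m' := by
  rw [pref_eq_map_range, pref_eq_map_range]
  exact mapRange_prefix h fun _ _ => rfl

lemma pref_length (p : ℕ → ℕ) (m : ℕ) : (pref p m).length = m := by
  simp [pref]

lemma pref_getD (p : ℕ → ℕ) {k m : ℕ} (h : k < m) : (pref p m).getD k 0 = p k := by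
  rw [pref_eq_map_range, List.getD_eq_getElem?_getD, mapRange_getElem? _ h]; rfl

lemma baireComputable_total {T : (ℕ → ℕ) → (ℕ → ℕ)} {ψ : List ℕ → List ℕ}
    (hc : Computable ψ)
    (hm : ∀ u v : List ℕ, u <+: v → ψ u <+: ψ v)
    (hs : ∀ r n, ∃ m, (ψ (pref r m))[n]? = some (T r n)) :
    BaireComputable (fun r => Part.some (T r)) := by
  refine ⟨ψ, hc, hm, ?_⟩
  intro p q hq n
  rw [Part.mem_some_iff] at hq
  subst hq
  exact hs p n

lemma primrec_rep : Primrec₂ (fun k c : ℕ => (List.range k).map (fun _ => c)) :=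
  Primrec.list_map (Primrec.list_range.comp Primrec.fst) (Primrec.snd.comp Primrec.fst).to₂

/-- pairB computations -/
lemma pairB_even (a b : ℕ → ℕ) (k : ℕ) : pairB a b (2 * k) = a k := by
  have h1 : (2 * k) % 2 = 0 := by omega
  have h2 : (2 * k) / 2 = k := by omega
  simp [pairB, h1, h2]

lemma pairB_odd (a b : ℕ → ℕ) (k : ℕ) : pairB a b (2 * k + 1) = b k := by
  have h1 : (2 * k + 1) % 2 = 1 := by omega
  have h2 : (2 * k + 1) / 2 = k := by omega
  simp [pairB, h1, h2]

/-- The identity is computable, hence `TRed` is reflexive and `p ≠ q`. -/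
lemma bc_id : BaireComputable (Part.some : (ℕ → ℕ) →. (ℕ → ℕ)) := by
  refine ⟨id, Computable.id, fun u v h => h, ?_⟩
  intro p q hq n
  rw [Part.mem_some_iff] at hq
  subst hq
  refine ⟨n + 1, ?_⟩
  rw [id, pref_eq_map_range]
  exact mapRange_getElem? _ (by omega)

lemma tred_refl (a : ℕ → ℕ) : TRed a a := ⟨Part.some, bc_id, Part.mem_some a⟩

/-- `H` realizer of output second component. -/
lemma bc_oddPart : BaireComputable (fun r => Part.some (oddPart r)) := by
  apply baireComputable_total
    (ψ := fun u => (List.range (u.length / 2)).map (fun i => u.getD (2 * i + 1) 0))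
  · exact (Primrec.list_map
      (Primrec.list_range.comp (Primrec.nat_div.comp Primrec.list_length (Primrec.const 2)))
      ((Primrec.list_getD 0).comp Primrec.fst
        (Primrec.succ.comp (Primrec.nat_mul.comp (Primrec.const 2) Primrec.snd))).to₂).to_comp
  · intro u v huv
    refine mapRange_prefix (by have := huv.length_le; omega) ?_
    intro i hi
    exact prefix_getD huv (by omega)
  · intro r n
    refine ⟨2 * n + 2, ?_⟩
    rw [mapRange_getElem? _ (show n < (pref r (2*n+2)).length / 2 by rw [pref_length]; omega)]
    rw [pref_getD r (by omega)]
    rfl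

end ManyOneAux
section ManyOneAux2

/-- `H` for the join direction: drop flag and take the odd part shifted by one. -/
lemma bc_H2 : BaireComputable (fun t => Part.some (fun m => t (2 * m + 3))) := by
  apply baireComputable_total
    (ψ := fun u => (List.range (u.length / 2 - 1)).map (fun i => u.getD (2 * i + 3) 0))
  · exact (Primrec.list_map
      (Primrec.list_range.comp (Primrec.nat_sub.comp
        (Primrec.nat_div.comp Primrec.list_length (Primrec.const 2)) (Primrec.const 1)))
      (((Primrec.list_getD 0).comp Primrec.fst
        (Primrec.nat_add.comp (Primrec.nat_mul.comp (Primrec.const 2) Primrec.snd)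
          (Primrec.const 3))).to₂)).to_comp
  · intro u v huv
    refine mapRange_prefix (by have := huv.length_le; omega) ?_
    intro i hi
    exact prefix_getD huv (by omega)
  · intro r n
    refine ⟨2 * n + 4, ?_⟩
    rw [mapRange_getElem? _ (show n < (pref r (2*n+4)).length / 2 - 1 by rw [pref_length]; omega)]
    rw [pref_getD r (by omega)]

/-- `K` for the first reduction: a constant sequence computed from the input head. -/
lemma bc_K1 {f : ℕ → ℕ} (hf : Computable f) :
    BaireComputable (fun r => Part.some ((fun _ => f (r 0)) : ℕ → ℕ)) := by
  apply baireComputable_total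
    (ψ := fun u => (List.range u.length).map (fun _ => f (u.getD 0 0)))
  · have h1 : Computable fun u : List ℕ => u.length := Primrec.list_length.to_comp
    have h3 : Primrec fun u : List ℕ => u.getD 0 0 :=
      (Primrec.list_getD 0).comp Primrec.id (Primrec.const 0)
    have h2 : Computable fun u : List ℕ => f (u.getD 0 0) := hf.comp h3.to_comp
    exact primrec_rep.to_comp.comp h1 h2
  · intro u v huv
    refine mapRange_prefix huv.length_le ?_
    intro i hi
    rw [prefix_getD huv (by omega)]
  · intro r n
    refine ⟨n + 1, ?_⟩
    rw [mapRange_getElem? _ (show n < (pref r (n+1)).length by rw [pref_length]; omega)]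
    rw [pref_getD r (by omega)]

/-- `K` for the join direction (forward): parity flag then half. -/
lemma bc_K2 : BaireComputable
    (fun r => Part.some ((fun i => if i = 0 then r 0 % 2 else r 0 / 2) : ℕ → ℕ)) := by
  apply baireComputable_total
    (ψ := fun u => (List.range u.length).map
      (fun i => if i = 0 then u.getD 0 0 % 2 else u.getD 0 0 / 2))
  · refine (Primrec.list_map (Primrec.list_range.comp Primrec.list_length) ?_).to_comp
    have hmod : Primrec fun a : List ℕ × ℕ => a.1.getD 0 0 % 2 :=
      Primrec.nat_mod.comp ((Primrec.list_getD 0).comp Primrec.fst (Primrec.const 0))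
        (Primrec.const 2)
    have hdiv : Primrec fun a : List ℕ × ℕ => a.1.getD 0 0 / 2 :=
      Primrec.nat_div.comp ((Primrec.list_getD 0).comp Primrec.fst (Primrec.const 0))
        (Primrec.const 2)
    exact (Primrec.ite (c := fun a : List ℕ × ℕ => a.2 = 0)
      (Primrec.eq.comp Primrec.snd (Primrec.const 0)) hmod hdiv).to₂
  · intro u v huv
    refine mapRange_prefix huv.length_le ?_
    intro i hi
    rw [prefix_getD huv (by omega)]
  · intro r n
    refine ⟨n + 1, ?_⟩
    rw [mapRange_getElem? _ (show n < (pref r (n+1)).length by rw [pref_length]; omega)]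
    rw [pref_getD r (by omega)]

/-- `K` for the join direction (backward): constant `2 * s 1 + s 0`. -/
lemma bc_K3 : BaireComputable
    (fun s => Part.some ((fun _ => 2 * s 1 + s 0) : ℕ → ℕ)) := by
  apply baireComputable_total
    (ψ := fun u => (List.range (u.length - 1)).map (fun _ => 2 * u.getD 1 0 + u.getD 0 0))
  · refine (Primrec.list_map
      (Primrec.list_range.comp (Primrec.nat_sub.comp Primrec.list_length (Primrec.const 1)))
      ?_).to_comp
    exact (Primrec.nat_add.comp
      (Primrec.nat_mul.comp (Primrec.const 2)
        ((Primrec.list_getD 0).comp Primrec.fst (Primrec.const 1)))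
      ((Primrec.list_getD 0).comp Primrec.fst (Primrec.const 0))).to₂
  · intro u v huv
    refine mapRange_prefix (by have := huv.length_le; omega) ?_
    intro i hi
    rw [prefix_getD huv (show (1:ℕ) < u.length by omega),
      prefix_getD huv (show (0:ℕ) < u.length by omega)]
  · intro s n
    refine ⟨n + 2, ?_⟩
    rw [mapRange_getElem? _ (show n < (pref s (n+2)).length - 1 by rw [pref_length]; omega)]
    rw [pref_getD s (by omega), pref_getD s (by omega)]

/-- `H` for the join direction (backward): reattach the flag. -/
lemma bc_H3 : BaireComputable
    (fun t => Part.some ((fun m => if m = 0 then t 0 else t (2 * m - 1)) : ℕ → ℕ)) := by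
  apply baireComputable_total
    (ψ := fun u => (List.range (if u.length = 0 then 0 else u.length / 2 + 1)).map
      (fun i => if i = 0 then u.getD 0 0 else u.getD (2 * i - 1) 0))
  · refine (Primrec.list_map (Primrec.list_range.comp
      (Primrec.ite (c := fun u : List ℕ => u.length = 0)
        (Primrec.eq.comp Primrec.list_length (Primrec.const 0)) (Primrec.const 0)
        (Primrec.succ.comp (Primrec.nat_div.comp Primrec.list_length (Primrec.const 2)))))
      ?_).to_comp
    refine (Primrec.ite (c := fun a : List ℕ × ℕ => a.2 = 0)
      (Primrec.eq.comp Primrec.snd (Primrec.const 0))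
      ((Primrec.list_getD 0).comp Primrec.fst (Primrec.const 0))
      ((Primrec.list_getD 0).comp Primrec.fst
        (Primrec.nat_sub.comp (Primrec.nat_mul.comp (Primrec.const 2) Primrec.snd)
          (Primrec.const 1)))).to₂
  · intro u v huv
    have hl := huv.length_le
    refine mapRange_prefix (by split <;> split <;> omega) ?_
    intro i hi
    have hu : u.length ≠ 0 := by by_contra h; simp [h] at hi
    rw [if_neg hu] at hi
    by_cases h0 : i = 0
    · rw [h0, if_pos rfl, if_pos rfl, prefix_getD huv (by omega)]
    · rw [if_neg h0, if_neg h0, prefix_getD huv (by omega)]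
  · intro t n
    refine ⟨2 * n + 2, ?_⟩
    have hL : n < if (pref t (2*n+2)).length = 0 then 0 else (pref t (2*n+2)).length / 2 + 1 := by
      rw [pref_length]; split <;> omega
    rw [mapRange_getElem? _ hL]
    by_cases h0 : n = 0
    · rw [h0]; simp only [if_pos rfl]
      rw [pref_getD t (by omega)]
    · rw [if_neg h0, if_neg h0, pref_getD t (by omega)]

/-- Composing a computable functional with pairing against a fixed constant sequence. -/
lemma bc_comp_pairConst {H : (ℕ → ℕ) →. (ℕ → ℕ)} (hH : BaireComputable H) (c : ℕ) :
    BaireComputable (fun y => H (pairB (fun _ => c) y)) := by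
  obtain ⟨ψ, hψc, hψm, hψs⟩ := hH
  set il : List ℕ → List ℕ :=
    fun u => (List.range (2 * u.length)).map
      (fun j => if j % 2 = 0 then c else u.getD (j / 2) 0) with hil
  have hilpref : ∀ (y : ℕ → ℕ) (m : ℕ), il (pref y m) = pref (pairB (fun _ => c) y) (2 * m) := by
    intro y m
    show (List.range (2 * (pref y m).length)).map
        (fun j => if j % 2 = 0 then c else (pref y m).getD (j / 2) 0)
      = pref (pairB (fun _ => c) y) (2 * m)
    rw [pref_eq_map_range (pairB (fun _ => c) y), pref_length]
    refine List.map_congr_left ?_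
    intro j hj
    rw [List.mem_range] at hj
    by_cases hp : j % 2 = 0
    · rw [if_pos hp]
      simp only [pairB, if_pos hp]
    · rw [if_neg hp, pref_getD y (by omega)]
      simp only [pairB, if_neg hp]
  have hilmono : ∀ u v : List ℕ, u <+: v → il u <+: il v := by
    intro u v huv
    have hl := huv.length_le
    refine mapRange_prefix (by omega) ?_
    intro j hj
    by_cases hp : j % 2 = 0
    · rw [if_pos hp, if_pos hp]
    · rw [if_neg hp, if_neg hp, prefix_getD huv (by omega)]
  have hilc : Computable il := by
    refine (Primrec.list_map
      (Primrec.list_range.comp (Primrec.nat_mul.comp (Primrec.const 2) Primrec.list_length))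
      ?_).to_comp
    refine (Primrec.ite (c := fun a : List ℕ × ℕ => a.2 % 2 = 0)
      (Primrec.eq.comp (Primrec.nat_mod.comp Primrec.snd (Primrec.const 2)) (Primrec.const 0))
      (Primrec.const c)
      ((Primrec.list_getD 0).comp Primrec.fst
        (Primrec.nat_div.comp Primrec.snd (Primrec.const 2)))).to₂
  refine ⟨fun u => ψ (il u), hψc.comp hilc, fun u v h => hψm _ _ (hilmono u v h), ?_⟩
  intro y z hz n
  obtain ⟨m, hm⟩ := hψs _ _ hz n
  refine ⟨m, ?_⟩
  show (ψ (il (pref y m)))[n]? = some (z n)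
  rw [hilpref y m]
  exact prefix_getElem? (hψm _ _ (pref_mono _ (by omega))) hm

/-- Key observation: a computable functional applied to `⟨const, y⟩` with `y ∈ {p,q}`
and value in `{p,q}` must return `y`. -/
lemma key_eq {p q : ℕ → ℕ} (hpq : ¬ TRed p q ∧ ¬ TRed q p)
    {H : (ℕ → ℕ) →. (ℕ → ℕ)} (hH : BaireComputable H) (c : ℕ)
    {y z : ℕ → ℕ} (hy : y = p ∨ y = q) (hz : z = p ∨ z = q)
    (hmem : z ∈ H (pairB (fun _ => c) y)) : z = y := by
  have hT : TRed z y := ⟨_, bc_comp_pairConst hH c, hmem⟩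
  rcases hy with rfl | rfl <;> rcases hz with rfl | rfl
  · rfl
  · exact absurd hT hpq.2
  · exact absurd hT hpq.1
  · rfl

lemma pq_ne {p q : ℕ → ℕ} (hpq : ¬ TRed p q ∧ ¬ TRed q p) : p ≠ q := by
  intro h
  exact hpq.1 (h ▸ tred_refl p)

/-- Membership helpers for the problem spaces. -/
lemma mem_pqRep {p q : ℕ → ℕ} (y : {r : ℕ → ℕ // r = p ∨ r = q}) :
    y ∈ (pqRep p q).δ y.1 :=
  Part.mem_mk_iff.mpr ⟨y.2, Subtype.ext rfl⟩

lemma eq_of_mem_pqRep {p q : ℕ → ℕ} {r : ℕ → ℕ} {y : {r : ℕ → ℕ // r = p ∨ r = q}}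
    (h : y ∈ (pqRep p q).δ r) : y.1 = r := by
  obtain ⟨hd, hv⟩ := Part.mem_mk_iff.mp h
  rw [← hv]

lemma mProblem_nonempty (p q : ℕ → ℕ) (A : Set ℕ) (n : ℕ) :
    (mProblem p q A n).Nonempty := by
  classical
  by_cases h : n ∈ A
  · exact ⟨⟨p, Or.inl rfl⟩, by simp [mProblem, h]⟩
  · exact ⟨⟨q, Or.inr rfl⟩, by simp [mProblem, h]⟩

lemma mem_mProblem_iff {p q : ℕ → ℕ} {A : Set ℕ} {n : ℕ}
    {y : {r : ℕ → ℕ // r = p ∨ r = q}} :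
    y ∈ mProblem p q A n ↔ y.1 = if n ∈ A then p else q := Iff.rfl

lemma mem_composite (K G H : (ℕ → ℕ) →. (ℕ → ℕ)) (r Kv g h : ℕ → ℕ)
    (hk : Kv ∈ K r) (hg : g ∈ G Kv) (hh : h ∈ H (pairB r g)) :
    h ∈ ((fun p => (K p).bind fun r' => (G r').bind fun q' => H (pairB p q')) r) :=
  Part.mem_bind_iff.mpr ⟨Kv, hk, Part.mem_bind_iff.mpr ⟨g, hg, hh⟩⟩

lemma sumRep_δ_0 {X Z : Type*} (δX : RepSp X) (δZ : RepSp Z) {r : ℕ → ℕ} (h : r 0 = 0) :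
    (sumRep δX δZ).δ r = (δX.δ fun n => r (n + 1)).map Sum.inl := by
  simp [sumRep, h]

lemma sumRep_δ_1 {X Z : Type*} (δX : RepSp X) (δZ : RepSp Z) {r : ℕ → ℕ} (h : r 0 = 1) :
    (sumRep δX δZ).δ r = (δZ.δ fun n => r (n + 1)).map Sum.inr := by
  simp [sumRep, h]

lemma sumRep_inl_inv {X Z : Type*} {δX : RepSp X} {δZ : RepSp Z} {r : ℕ → ℕ} {x : X}
    (h : Sum.inl x ∈ (sumRep δX δZ).δ r) :
    r 0 = 0 ∧ x ∈ δX.δ fun n => r (n + 1) := by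
  by_cases h0 : r 0 = 0
  · rw [sumRep_δ_0 _ _ h0] at h
    obtain ⟨x', hx', he⟩ := (Part.mem_map_iff _).mp h
    cases he
    exact ⟨h0, hx'⟩
  · by_cases h1 : r 0 = 1
    · rw [sumRep_δ_1 _ _ h1] at h
      obtain ⟨x', hx', he⟩ := (Part.mem_map_iff _).mp h
      exact absurd he (by simp)
    · exfalso
      have : (sumRep δX δZ).δ r = Part.none := by simp [sumRep, h0, h1]
      rw [this] at h
      exact Part.notMem_none _ h

lemma sumRep_inr_inv {X Z : Type*} {δX : RepSp X} {δZ : RepSp Z} {r : ℕ → ℕ} {z : Z}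
    (h : Sum.inr z ∈ (sumRep δX δZ).δ r) :
    r 0 = 1 ∧ z ∈ δZ.δ fun n => r (n + 1) := by
  by_cases h0 : r 0 = 0
  · rw [sumRep_δ_0 _ _ h0] at h
    obtain ⟨x', hx', he⟩ := (Part.mem_map_iff _).mp h
    exact absurd he (by simp)
  · by_cases h1 : r 0 = 1
    · rw [sumRep_δ_1 _ _ h1] at h
      obtain ⟨x', hx', he⟩ := (Part.mem_map_iff _).mp h
      cases he
      exact ⟨h1, hx'⟩
    · exfalso
      have : (sumRep δX δZ).δ r = Part.none := by simp [sumRep, h0, h1]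
      rw [this] at h
      exact Part.notMem_none _ h

end ManyOneAux2
section ManyOneMain

/-- Forward direction of the first part. -/
lemma manyOne_to_wred (p q : ℕ → ℕ) (A B : Set ℕ)
    (h : (fun n => n ∈ A) ≤₀ (fun n => n ∈ B)) :
    WRed repNat (pqRep p q) repNat (pqRep p q) (mProblem p q A) (mProblem p q B) := by
  classical
  obtain ⟨f, hf, hfB⟩ := h
  refine ⟨fun t => Part.some (oddPart t), fun r => Part.some (fun _ => f (r 0)),
    bc_oddPart, bc_K1 hf, ?_⟩
  intro G hG r n hn _
  have hn' : n = r 0 := Part.mem_some_iff.mp hn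
  have hfn : (f n : ℕ) ∈ repNat.δ (fun _ => f (r 0)) := by
    rw [hn']; exact Part.mem_some _
  obtain ⟨y', hy', y, hy, hyB⟩ := hG (fun _ => f (r 0)) (f n) hfn (mProblem_nonempty p q B (f n))
  have hodd : oddPart (pairB r y') = y' := funext fun k => pairB_odd r y' k
  refine ⟨y', mem_composite (fun r => Part.some (fun _ => f (r 0))) G
    (fun t => Part.some (oddPart t)) r (fun _ => f (r 0)) y' y'
    (Part.mem_some _) hy' (Part.mem_some_iff.mpr hodd.symm), y, hy, ?_⟩
  rw [mem_mProblem_iff] at hyB ⊢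
  rw [hyB]
  by_cases hA : n ∈ A
  · rw [if_pos ((hfB n).mp hA), if_pos hA]
  · rw [if_neg (fun hc => hA ((hfB n).mpr hc)), if_neg hA]

/-- Backward direction of the first part. -/
lemma wred_to_manyOne (p q : ℕ → ℕ) (hpq : ¬ TRed p q ∧ ¬ TRed q p) (A B : Set ℕ)
    (h : WRed repNat (pqRep p q) repNat (pqRep p q) (mProblem p q A) (mProblem p q B)) :
    (fun n => n ∈ A) ≤₀ (fun n => n ∈ B) := by
  classical
  obtain ⟨H, K, hH, hK, hmain⟩ := h
  obtain ⟨ψ, hψc, hψm, hψs⟩ := hK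
  have hne := pq_ne hpq
  have hG₀ : Realizes repNat (pqRep p q) (mProblem p q B)
      (fun r => Part.some (if r 0 ∈ B then p else q)) := by
    intro r n hn _
    have hn' : n = r 0 := Part.mem_some_iff.mp hn
    have hor : (if r 0 ∈ B then p else q) = p ∨ (if r 0 ∈ B then p else q) = q := by
      by_cases hb : r 0 ∈ B
      · rw [if_pos hb]; exact Or.inl rfl
      · rw [if_neg hb]; exact Or.inr rfl
    refine ⟨if r 0 ∈ B then p else q, Part.mem_some _,
      ⟨if r 0 ∈ B then p else q, hor⟩, mem_pqRep ⟨_, hor⟩, ?_⟩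
    rw [mem_mProblem_iff, hn']
  have hreal := hmain _ hG₀
  have hdata : ∀ n : ℕ, ∃ r', r' ∈ K (fun _ => n) ∧ ((n ∈ A) ↔ (r' 0 ∈ B)) := by
    intro n
    obtain ⟨z, hz, y, hy, hyA⟩ :=
      hreal (fun _ => n) n (Part.mem_some n) (mProblem_nonempty p q A n)
    rw [Part.mem_bind_iff] at hz
    obtain ⟨r', hr', hz⟩ := hz
    rw [Part.mem_bind_iff] at hz
    obtain ⟨y', hy', hz⟩ := hz
    have hy'eq : y' = if r' 0 ∈ B then p else q := Part.mem_some_iff.mp hy'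
    have hzeq : z = if n ∈ A then p else q := by
      rw [← eq_of_mem_pqRep hy]
      exact mem_mProblem_iff.mp hyA
    have hor_y' : y' = p ∨ y' = q := by
      rw [hy'eq]; split
      · exact Or.inl rfl
      · exact Or.inr rfl
    have hor_z : z = p ∨ z = q := by
      rw [hzeq]; split
      · exact Or.inl rfl
      · exact Or.inr rfl
    have hkey : z = y' := key_eq hpq hH n hor_y' hor_z hz
    refine ⟨r', hr', ?_⟩
    rw [hy'eq, hzeq] at hkey
    constructor
    · intro hA
      by_contra hB
      rw [if_pos hA, if_neg hB] at hkey
      exact hne hkey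
    · intro hB
      by_contra hA
      rw [if_neg hA, if_pos hB] at hkey
      exact hne hkey.symm
  have hFmono : ∀ n : ℕ, ∀ {a m m' : ℕ}, m ≤ m' →
      a ∈ (ψ ((List.range m).map (fun _ => n)))[0]? →
      a ∈ (ψ ((List.range m').map (fun _ => n)))[0]? := by
    intro n a m m' hmm ha
    rw [Option.mem_def] at ha ⊢
    exact prefix_getElem? (hψm _ _ (mapRange_prefix hmm fun _ _ => rfl)) ha
  have hmem : ∀ n : ℕ, ∀ r' ∈ K (fun _ => n),
      r' 0 ∈ Nat.rfindOpt fun m => (ψ ((List.range m).map (fun _ => n)))[0]? := by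
    intro n r' hr'
    obtain ⟨m, hm⟩ := hψs (fun _ => n) r' hr' 0
    rw [pref_eq_map_range] at hm
    exact (Nat.rfindOpt_mono (fun {a m m'} h => hFmono n h)).mpr ⟨m, Option.mem_def.mpr hm⟩
  have hdom : ∀ n, (Nat.rfindOpt fun m => (ψ ((List.range m).map (fun _ => n)))[0]?).Dom := by
    intro n
    obtain ⟨r', hr', _⟩ := hdata n
    exact Part.dom_iff_mem.mpr ⟨_, hmem n r' hr'⟩
  have hFpartrec : Partrec fun n : ℕ =>
      Nat.rfindOpt fun m => (ψ ((List.range m).map (fun _ => n)))[0]? := by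
    apply Partrec.rfindOpt
    have h1 : Computable fun a : ℕ × ℕ => (List.range a.2).map (fun _ => a.1) :=
      primrec_rep.to_comp.comp Computable.snd Computable.fst
    have h2 : Computable fun a : ℕ × ℕ => ψ ((List.range a.2).map (fun _ => a.1)) :=
      hψc.comp h1
    exact Primrec.list_getElem?.to_comp.comp h2 (Computable.const 0)
  refine ⟨fun n => (Nat.rfindOpt fun m => (ψ ((List.range m).map (fun _ => n)))[0]?).get (hdom n),
    Partrec.of_eq_tot hFpartrec (fun n => Part.get_mem _), ?_⟩
  intro n
  obtain ⟨r', hr', hiff⟩ := hdata n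
  have hg : (Nat.rfindOpt fun m => (ψ ((List.range m).map (fun _ => n)))[0]?).get (hdom n)
      = r' 0 := Part.mem_unique (Part.get_mem _) (hmem n r' hr')
  show n ∈ A ↔ (Nat.rfindOpt fun m => (ψ ((List.range m).map (fun _ => n)))[0]?).get (hdom n) ∈ B
  rw [hg]
  exact hiff

/-- First direction of the join equivalence. -/
lemma join_red1 (p q : ℕ → ℕ) (A B : Set ℕ) :
    WRed repNat (pqRep p q) (sumRep repNat repNat) (sumRep (pqRep p q) (pqRep p q))
      (mProblem p q (mJoin A B)) (coprodProblem (mProblem p q A) (mProblem p q B)) := by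
  classical
  refine ⟨fun t => Part.some (fun m => t (2 * m + 3)),
    fun r => Part.some (fun i => if i = 0 then r 0 % 2 else r 0 / 2), bc_H2, bc_K2, ?_⟩
  intro G hG r k hk _
  have hk' : k = r 0 := Part.mem_some_iff.mp hk
  by_cases hpar : r 0 % 2 = 0
  · have hs0 : (if (0:ℕ) = 0 then r 0 % 2 else r 0 / 2) = 0 := by rw [if_pos rfl, hpar]
    have hx : (Sum.inl (r 0 / 2) : ℕ ⊕ ℕ) ∈ (sumRep repNat repNat).δ
        (fun i => if i = 0 then r 0 % 2 else r 0 / 2) := by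
      rw [sumRep_δ_0 _ _ hs0]
      refine (Part.mem_map_iff _).mpr ⟨r 0 / 2, ?_, rfl⟩
      exact Part.mem_some_iff.mpr (by norm_num)
    have hxne : (coprodProblem (mProblem p q A) (mProblem p q B) (Sum.inl (r 0 / 2))).Nonempty := by
      obtain ⟨y, hy⟩ := mProblem_nonempty p q A (r 0 / 2)
      exact ⟨Sum.inl y, ⟨y, hy, rfl⟩⟩
    obtain ⟨t, ht, w, hw, hwc⟩ := hG _ _ hx hxne
    obtain ⟨y, hy, rfl⟩ := hwc
    obtain ⟨ht0, hty⟩ := sumRep_inl_inv hw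
    have hyt : y.1 = fun n => t (n + 1) := eq_of_mem_pqRep hty
    have hout : (fun m => (pairB r t) (2 * m + 3)) = y.1 := by
      funext m
      have he : 2 * m + 3 = 2 * (m + 1) + 1 := by omega
      rw [he, pairB_odd, hyt]
    refine ⟨y.1, mem_composite (fun r => Part.some (fun i => if i = 0 then r 0 % 2 else r 0 / 2))
      G (fun t => Part.some (fun m => t (2 * m + 3))) r
      (fun i => if i = 0 then r 0 % 2 else r 0 / 2) t y.1
      (Part.mem_some _) ht (Part.mem_some_iff.mpr hout.symm),
      y, mem_pqRep y, ?_⟩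
    rw [mem_mProblem_iff]
    have hiff : k ∈ mJoin A B ↔ r 0 / 2 ∈ A := by
      rw [hk']
      simp only [mJoin, Set.mem_setOf_eq]
      constructor
      · rintro (⟨h1, h2⟩ | ⟨h1, h2⟩)
        · exact h2
        · omega
      · intro hA
        exact Or.inl ⟨hpar, hA⟩
    rw [mem_mProblem_iff] at hy
    rw [hy]
    by_cases hA : r 0 / 2 ∈ A
    · rw [if_pos hA, if_pos (hiff.mpr hA)]
    · rw [if_neg hA, if_neg (fun hc => hA (hiff.mp hc))]
  · have hpar1 : r 0 % 2 = 1 := by omega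
    have hs0 : (if (0:ℕ) = 0 then r 0 % 2 else r 0 / 2) = 1 := by rw [if_pos rfl, hpar1]
    have hx : (Sum.inr (r 0 / 2) : ℕ ⊕ ℕ) ∈ (sumRep repNat repNat).δ
        (fun i => if i = 0 then r 0 % 2 else r 0 / 2) := by
      rw [sumRep_δ_1 _ _ hs0]
      refine (Part.mem_map_iff _).mpr ⟨r 0 / 2, ?_, rfl⟩
      exact Part.mem_some_iff.mpr (by norm_num)
    have hxne : (coprodProblem (mProblem p q A) (mProblem p q B) (Sum.inr (r 0 / 2))).Nonempty := by
      obtain ⟨y, hy⟩ := mProblem_nonempty p q B (r 0 / 2)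
      exact ⟨Sum.inr y, ⟨y, hy, rfl⟩⟩
    obtain ⟨t, ht, w, hw, hwc⟩ := hG _ _ hx hxne
    obtain ⟨y, hy, rfl⟩ := hwc
    obtain ⟨ht0, hty⟩ := sumRep_inr_inv hw
    have hyt : y.1 = fun n => t (n + 1) := eq_of_mem_pqRep hty
    have hout : (fun m => (pairB r t) (2 * m + 3)) = y.1 := by
      funext m
      have he : 2 * m + 3 = 2 * (m + 1) + 1 := by omega
      rw [he, pairB_odd, hyt]
    refine ⟨y.1, mem_composite (fun r => Part.some (fun i => if i = 0 then r 0 % 2 else r 0 / 2))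
      G (fun t => Part.some (fun m => t (2 * m + 3))) r
      (fun i => if i = 0 then r 0 % 2 else r 0 / 2) t y.1
      (Part.mem_some _) ht (Part.mem_some_iff.mpr hout.symm),
      y, mem_pqRep y, ?_⟩
    rw [mem_mProblem_iff]
    have hiff : k ∈ mJoin A B ↔ r 0 / 2 ∈ B := by
      rw [hk']
      simp only [mJoin, Set.mem_setOf_eq]
      constructor
      · rintro (⟨h1, h2⟩ | ⟨h1, h2⟩)
        · omega
        · exact h2
      · intro hB
        exact Or.inr ⟨hpar1, hB⟩
    rw [mem_mProblem_iff] at hy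
    rw [hy]
    by_cases hB : r 0 / 2 ∈ B
    · rw [if_pos hB, if_pos (hiff.mpr hB)]
    · rw [if_neg hB, if_neg (fun hc => hB (hiff.mp hc))]

/-- Second direction of the join equivalence. -/
lemma join_red2 (p q : ℕ → ℕ) (A B : Set ℕ) :
    WRed (sumRep repNat repNat) (sumRep (pqRep p q) (pqRep p q)) repNat (pqRep p q)
      (coprodProblem (mProblem p q A) (mProblem p q B)) (mProblem p q (mJoin A B)) := by
  classical
  refine ⟨fun t => Part.some (fun m => if m = 0 then t 0 else t (2 * m - 1)),
    fun s => Part.some (fun _ => 2 * s 1 + s 0), bc_H3, bc_K3, ?_⟩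
  intro G hG s x hx _
  obtain ⟨y', hy', y, hy, hyJ⟩ := hG (fun _ => 2 * s 1 + s 0) (2 * s 1 + s 0)
    (Part.mem_some_iff.mpr rfl)
    (mProblem_nonempty p q (mJoin A B) (2 * s 1 + s 0))
  have hy'1 : y.1 = y' := eq_of_mem_pqRep hy
  rw [mem_mProblem_iff] at hyJ
  have ho0 : (if (0:ℕ) = 0 then (pairB s y') 0 else (pairB s y') (2 * 0 - 1)) = s 0 := by
    rw [if_pos rfl]
    show pairB s y' (2 * 0) = s 0
    rw [pairB_even]
  have hotail : (fun n => (fun m => if m = 0 then (pairB s y') 0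
      else (pairB s y') (2 * m - 1)) (n + 1)) = y' := by
    funext m
    have h1 : m + 1 ≠ 0 := by omega
    have h2 : 2 * (m + 1) - 1 = 2 * m + 1 := by omega
    show (if m + 1 = 0 then (pairB s y') 0 else (pairB s y') (2 * (m + 1) - 1)) = y' m
    rw [if_neg h1, h2, pairB_odd]
  rcases x with n | n
  · obtain ⟨hs0, hn⟩ := sumRep_inl_inv hx
    have hn' : n = s 1 := Part.mem_some_iff.mp hn
    have hk2 : (2 * s 1 + s 0) % 2 = 0 := by omega
    have hk3 : (2 * s 1 + s 0) / 2 = s 1 := by omega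
    have hiff : (2 * s 1 + s 0) ∈ mJoin A B ↔ n ∈ A := by
      subst hn'
      simp only [mJoin, Set.mem_setOf_eq]
      constructor
      · rintro (⟨h1, h2⟩ | ⟨h1, h2⟩)
        · rwa [hk3] at h2
        · omega
      · intro hA
        exact Or.inl ⟨hk2, by rwa [hk3]⟩
    have hoo : (fun m => if m = 0 then (pairB s y') 0 else (pairB s y') (2 * m - 1)) 0 = 0 := by
      show (if (0:ℕ) = 0 then (pairB s y') 0 else (pairB s y') (2 * 0 - 1)) = 0
      rw [ho0, hs0]
    refine ⟨fun m => if m = 0 then (pairB s y') 0 else (pairB s y') (2 * m - 1),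
      mem_composite (fun s => Part.some (fun _ => 2 * s 1 + s 0)) G
        (fun t => Part.some (fun m => if m = 0 then t 0 else t (2 * m - 1))) s
        (fun _ => 2 * s 1 + s 0) y' _
        (Part.mem_some _) hy' (Part.mem_some _), Sum.inl y, ?_, ?_⟩
    · rw [sumRep_δ_0 (pqRep p q) (pqRep p q)
        (r := fun m => if m = 0 then (pairB s y') 0 else (pairB s y') (2 * m - 1)) hoo]
      refine (Part.mem_map_iff _).mpr ⟨y, ?_, rfl⟩
      rw [hotail, ← hy'1]
      exact mem_pqRep y
    · refine ⟨y, ?_, rfl⟩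
      rw [mem_mProblem_iff]
      show y.1 = if n ∈ A then p else q
      rw [hyJ]
      show (if 2 * s 1 + s 0 ∈ mJoin A B then p else q) = _
      by_cases hA : n ∈ A
      · rw [if_pos (hiff.mpr hA), if_pos hA]
      · rw [if_neg (fun hc => hA (hiff.mp hc)), if_neg hA]
  · obtain ⟨hs0, hn⟩ := sumRep_inr_inv hx
    have hn' : n = s 1 := Part.mem_some_iff.mp hn
    have hk2 : (2 * s 1 + s 0) % 2 = 1 := by omega
    have hk3 : (2 * s 1 + s 0) / 2 = s 1 := by omega
    have hiff : (2 * s 1 + s 0) ∈ mJoin A B ↔ n ∈ B := by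
      subst hn'
      simp only [mJoin, Set.mem_setOf_eq]
      constructor
      · rintro (⟨h1, h2⟩ | ⟨h1, h2⟩)
        · omega
        · rwa [hk3] at h2
      · intro hB
        exact Or.inr ⟨hk2, by rwa [hk3]⟩
    have hoo : (fun m => if m = 0 then (pairB s y') 0 else (pairB s y') (2 * m - 1)) 0 = 1 := by
      show (if (0:ℕ) = 0 then (pairB s y') 0 else (pairB s y') (2 * 0 - 1)) = 1
      rw [ho0, hs0]
    refine ⟨fun m => if m = 0 then (pairB s y') 0 else (pairB s y') (2 * m - 1),
      mem_composite (fun s => Part.some (fun _ => 2 * s 1 + s 0)) G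
        (fun t => Part.some (fun m => if m = 0 then t 0 else t (2 * m - 1))) s
        (fun _ => 2 * s 1 + s 0) y' _
        (Part.mem_some _) hy' (Part.mem_some _), Sum.inr y, ?_, ?_⟩
    · rw [sumRep_δ_1 (pqRep p q) (pqRep p q)
        (r := fun m => if m = 0 then (pairB s y') 0 else (pairB s y') (2 * m - 1)) hoo]
      refine (Part.mem_map_iff _).mpr ⟨y, ?_, rfl⟩
      rw [hotail, ← hy'1]
      exact mem_pqRep y
    · refine ⟨y, ?_, rfl⟩
      rw [mem_mProblem_iff]
      show y.1 = if n ∈ B then p else q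
      rw [hyJ]
      show (if 2 * s 1 + s 0 ∈ mJoin A B then p else q) = _
      by_cases hB : n ∈ B
      · rw [if_pos (hiff.mpr hB), if_pos hB]
      · rw [if_neg (fun hc => hB (hiff.mp hc)), if_neg hB]

end ManyOneMain

/-- the many-one semilattice embeds into the Weihrauch degrees. -/
theorem many_one_embedding (p q : ℕ → ℕ) (hpq : ¬ TRed p q ∧ ¬ TRed q p)
    (A B : Set ℕ) :
    ((fun n => n ∈ A) ≤₀ (fun n => n ∈ B) ↔
      WRed repNat (pqRep p q) repNat (pqRep p q) (mProblem p q A) (mProblem p q B)) ∧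
    WEquiv repNat (pqRep p q) (sumRep repNat repNat)
      (sumRep (pqRep p q) (pqRep p q))
      (mProblem p q (mJoin A B))
      (coprodProblem (mProblem p q A) (mProblem p q B)) := by
  exact ⟨⟨manyOne_to_wred p q A B, wred_to_manyOne p q hpq A B⟩,
    join_red1 p q A B, join_red2 p q A B⟩
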